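/- Over the max-plus semifield, for any n×n matrix A with spectral radius λ = max over k=1..n of (tr(A^k))^{1/k} (i.e., λ = max_k tr(A^k)/k in conventional arithmetic) with λ > -∞, and for every regular vector x, the value x⁻ A x is at least λ; i.e., λ is a lower bound for the objective x⁻ A x over regular x. -/

import Mathlib

/-- Max-plus matrix–vector product: `(A x)_i = max_j (a_{ij} + x_j)`. -/
noncomputable def mpMulVec {n : ℕ} (A : Fin n → Fin n → EReal) (x : Fin n → EReal) :
    Fin n → EReal :=
  fun i => Finset.univ.sup fun j => A i j + x j

/-- Max-plus matrix product. -/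
noncomputable def mpMul {n : ℕ} (A B : Fin n → Fin n → EReal) :
    Fin n → Fin n → EReal :=
  fun i j => Finset.univ.sup fun k => A i k + B k j

/-- Max-plus identity matrix: `0` on the diagonal and `-∞` elsewhere. -/
noncomputable def mpId {n : ℕ} : Fin n → Fin n → EReal :=
  fun i j => if i = j then 0 else ⊥

/-- Max-plus matrix power. -/
noncomputable def mpPow {n : ℕ} (A : Fin n → Fin n → EReal) : ℕ → (Fin n → Fin n → EReal)
  | 0 => mpId
  | k + 1 => mpMul (mpPow A k) A

/-- Max-plus trace: maximum of the diagonal entries. -/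
noncomputable def mpTrace {n : ℕ} (A : Fin n → Fin n → EReal) : EReal :=
  Finset.univ.sup fun i => A i i

/-- `Tr(A) = tr A ⊕ tr A² ⊕ ⋯ ⊕ tr Aⁿ`. -/
noncomputable def mpTr {n : ℕ} (A : Fin n → Fin n → EReal) : EReal :=
  (Finset.Icc 1 n).sup fun k => mpTrace (mpPow A k)

/-- The Kleene star `A* = I ⊕ A ⊕ ⋯ ⊕ A^{n-1}`. -/
noncomputable def mpStar {n : ℕ} (A : Fin n → Fin n → EReal) :
    Fin n → Fin n → EReal :=
  fun i j => (Finset.range n).sup fun k => mpPow A k i j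

/-- Adding a constant on the right distributes over finite sup in `EReal`. -/
lemma mp_sup_add_right {α} (s : Finset α) (f : α → EReal) (c : EReal) :
    s.sup (fun m => f m + c) = s.sup f + c := by
  classical
  induction s using Finset.induction with
  | empty => simp
  | insert h s _ ih => simp [Finset.sup_insert, ih, max_add_add_right]

/-- Adding a constant on the left distributes over finite sup in `EReal`. -/
lemma mp_sup_add_left {α} (s : Finset α) (f : α → EReal) (c : EReal) :
    s.sup (fun m => c + f m) = c + s.sup f := by
  simp only [add_comm c]
  exact mp_sup_add_right s f c

lemma mp_cancel_mid (b : ℝ) (X Y : EReal) : (X + ↑b) + (-(↑b : EReal) + Y) = X + Y := by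
  rw [add_assoc, ← add_assoc (↑b : EReal), ← EReal.coe_neg, ← EReal.coe_add]
  simp

lemma mp_conj_cancel (a : ℝ) (v : EReal) : -(↑a : EReal) + v + ↑a = v := by
  rw [add_comm (-(↑a : EReal)) v, add_assoc, ← EReal.coe_neg, ← EReal.coe_add]
  simp

/-- Conjugation of a max-plus power by a diagonal matrix. -/
lemma mp_pow_conj {n : ℕ} (A : Fin n → Fin n → EReal) (x : Fin n → ℝ) (k : ℕ) :
    ∀ i j, mpPow (fun i j => -(x i : EReal) + A i j + (x j : EReal)) k i j
      = -(x i : EReal) + mpPow A k i j + (x j : EReal) := by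
  induction k with
  | zero =>
    intro i j
    simp only [mpPow, mpId]
    by_cases h : i = j
    · subst h
      rw [if_pos rfl]
      exact (mp_conj_cancel (x i) 0).symm
    · simp [h]
  | succ k ih =>
    intro i j
    show (Finset.univ.sup fun m =>
        mpPow (fun i j => -(x i : EReal) + A i j + (x j : EReal)) k i m
          + (-(x m : EReal) + A m j + (x j : EReal)))
      = -(x i : EReal) + mpPow A (k+1) i j + (x j : EReal)
    have hterm : ∀ m : Fin n,
        mpPow (fun i j => -(x i : EReal) + A i j + (x j : EReal)) k i m
          + (-(x m : EReal) + A m j + (x j : EReal))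
        = -(x i : EReal) + (mpPow A k i m + A m j) + (x j : EReal) := by
      intro m
      rw [ih i m]
      have h1 : -(x i : EReal) + mpPow A k i m + (x m : EReal)
          = (-(x i : EReal) + mpPow A k i m) + (x m : EReal) := rfl
      have h2 : -(x m : EReal) + A m j + (x j : EReal)
          = -(x m : EReal) + (A m j + (x j : EReal)) := add_assoc _ _ _
      rw [h1, h2, mp_cancel_mid, ← add_assoc, add_assoc (-(↑(x i) : EReal))]
    calc (Finset.univ.sup fun m =>
        mpPow (fun i j => -(x i : EReal) + A i j + (x j : EReal)) k i m
          + (-(x m : EReal) + A m j + (x j : EReal)))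
        = Finset.univ.sup fun m =>
            -(x i : EReal) + (mpPow A k i m + A m j) + (x j : EReal) := by
          exact Finset.sup_congr rfl (fun m _ => hterm m)
      _ = (Finset.univ.sup fun m => -(x i : EReal) + (mpPow A k i m + A m j)) + (x j : EReal) :=
          mp_sup_add_right _ _ _
      _ = -(x i : EReal) + (Finset.univ.sup fun m => mpPow A k i m + A m j) + (x j : EReal) := by
          rw [mp_sup_add_left]
      _ = -(x i : EReal) + mpPow A (k+1) i j + (x j : EReal) := rfl

/-- Bound on powers of a matrix whose entries are all `≤ M`. -/
lemma mp_pow_le {n : ℕ} (B : Fin n → Fin n → EReal) (M : EReal)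
    (hB : ∀ i j, B i j ≤ M) : ∀ k i j, mpPow B (k + 1) i j ≤ (k + 1) • M := by
  intro k
  induction k with
  | zero =>
    intro i j
    show (Finset.univ.sup fun m => mpId i m + B m j) ≤ 1 • M
    rw [one_nsmul]
    refine Finset.sup_le fun m _ => ?_
    by_cases h : i = m
    · simp [mpId, h, hB m j]
    · simp [mpId, h]
  | succ k ih =>
    intro i j
    show (Finset.univ.sup fun m => mpPow B (k + 1) i m + B m j) ≤ (k + 2) • M
    refine Finset.sup_le fun m _ => ?_
    calc mpPow B (k + 1) i m + B m j ≤ (k + 1) • M + M :=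
          add_le_add (ih i m) (hB m j)
      _ = (k + 2) • M := (succ_nsmul M (k + 1)).symm

lemma mp_nsmul_bot (k : ℕ) : (k + 1) • (⊥ : EReal) = ⊥ := by
  induction k with
  | zero => simp
  | succ k ih => rw [succ_nsmul, ih, EReal.bot_add]

lemma mp_final (k : ℕ) (lam : ℝ) (M : EReal)
    (hle : ((((k + 1 : ℕ) : ℝ) * lam : ℝ) : EReal) ≤ (k + 1) • M) : (lam : EReal) ≤ M := by
  induction M using EReal.rec with
  | bot =>
    rw [mp_nsmul_bot] at hle
    exact absurd (le_bot_iff.mp hle) (EReal.coe_ne_bot _)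
  | coe m =>
    have hsmul : (k + 1) • ((m : ℝ) : EReal) = (((k + 1 : ℕ) • m : ℝ) : EReal) := by
      exact_mod_cast rfl
    rw [hsmul, EReal.coe_le_coe_iff, nsmul_eq_mul] at hle
    rw [EReal.coe_le_coe_iff]
    have hkpos : (0 : ℝ) < ((k + 1 : ℕ) : ℝ) := by positivity
    exact (mul_le_mul_iff_right₀ hkpos).mp hle
  | top => exact le_top

theorem stmt15 {n : ℕ} (A : Fin n → Fin n → EReal) (lam : ℝ)
    (hub : ∀ k ∈ Finset.Icc 1 n, mpTrace (mpPow A k) ≤ (((k : ℝ) * lam : ℝ) : EReal))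
    (hex : ∃ k ∈ Finset.Icc 1 n, mpTrace (mpPow A k) = (((k : ℝ) * lam : ℝ) : EReal)) :
    ∀ x : Fin n → ℝ, (lam : EReal) ≤
      Finset.univ.sup fun i => Finset.univ.sup fun j =>
        (-(x i : EReal)) + A i j + (x j : EReal) := by
  intro x
  set B : Fin n → Fin n → EReal := fun i j => -(x i : EReal) + A i j + (x j : EReal) with hBdef
  set M : EReal := Finset.univ.sup fun i => Finset.univ.sup fun j =>
      (-(x i : EReal)) + A i j + (x j : EReal) with hMdef
  have hB : ∀ i j, B i j ≤ M := by
    intro i j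
    exact le_trans (Finset.le_sup (f := fun j => -(x i : EReal) + A i j + (x j : EReal))
      (Finset.mem_univ j))
      (Finset.le_sup (f := fun i => Finset.univ.sup fun j => -(x i : EReal) + A i j + (x j : EReal))
        (Finset.mem_univ i))
  obtain ⟨k, hk, heq⟩ := hex
  obtain ⟨hk1, hkn⟩ := Finset.mem_Icc.mp hk
  -- trace of B^k equals trace of A^k
  have htr : mpTrace (mpPow B k) = mpTrace (mpPow A k) := by
    refine Finset.sup_congr rfl fun i _ => ?_
    rw [hBdef, mp_pow_conj A x k i i, mp_conj_cancel]
  -- trace of B^k is ≤ k • M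
  obtain ⟨k', rfl⟩ : ∃ k', k = k' + 1 := ⟨k - 1, (Nat.succ_pred_eq_of_pos hk1).symm⟩
  have hle : mpTrace (mpPow B (k' + 1)) ≤ (k' + 1) • M :=
    Finset.sup_le fun i _ => mp_pow_le B M hB k' i i
  rw [htr, heq] at hle
  exact mp_final k' lam M hle
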